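/- Let M₁, M₂ be topological spaces, f : M₁ → M₂ and e : M₁ → Dᵏ continuous, where Dᵏ is the closed ball of radius ε in ℝᵏ with 0 < ε < 1/4. Let π : N → M₁ be a real topological vector bundle with zero section m ↦ 0ₘ, and let ν_e : N → M₂ × Dᵏ be a topological embedding (a continuous injection that is a homeomorphism onto its image) satisfying ν_e(0ₘ) = (f(m), e(m)) for all m ∈ M₁. Set X₂ = {(m,γ,s,x) ∈ Λ₁,₂ × [0,1] × Dᵏ : (γ(s),x) ∈ ν_e(N)} with the subspace topology. Then the map (f′₂,e) : W₁₁,₂ → X₂ given by (m,m′,γ,s) ↦ (m,γ,s,e(m′)) is well-defined (its image lies in X₂ since (γ(s),e(m′)) = (f(m′),e(m′)) = ν_e(0_{m′}), and it sends B₁₁,₂ into B̄₁,₂), and it is a homotopy equivalence of pairs (W₁₁,₂, B₁₁,₂) → (X₂, B̄₁,₂): there exists a map of pairs r : (X₂, B̄₁,₂) → (W₁₁,₂, B₁₁,₂) such that r∘(f′₂,e) and (f′₂,e)∘r are homotopic to the respective identities through homotopies preserving B₁₁,₂ (respectively B̄₁,₂) at every time. -/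

import Mathlib

/-!
Statement 4: given a real topological vector bundle `N → M₁` and a topological
embedding `ν_e : N → M₂ × Dᵏ` with `ν_e(0ₘ) = (f(m), e(m))`, the map
`(f′₂,e) : W₁₁,₂ → X₂`, `(m,m′,γ,s) ↦ (m,γ,s,e(m′))`, is well defined and is a
homotopy equivalence of pairs `(W₁₁,₂, B₁₁,₂) → (X₂, B̄₁,₂)`.
-/

open unitInterval

/-- The free loop space of `X`. -/
abbrev LoopSp (X : Type) [TopologicalSpace X] : Type :=
  {γ : C(unitInterval, X) // γ 0 = γ 1}

/-- The constant loop at `x`. -/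
def constLoop {X : Type} [TopologicalSpace X] (x : X) : LoopSp X :=
  ⟨ContinuousMap.const _ x, rfl⟩

variable {M₁ M₂ : Type} [TopologicalSpace M₁] [TopologicalSpace M₂]

/-- `Λ₁,₂ = {(m,γ) ∈ M₁ × ΛM₂ : f(m) = γ(0)}`. -/
abbrev Lam12 (f : C(M₁, M₂)) : Type :=
  {p : M₁ × LoopSp M₂ // f p.1 = p.2.1 0}

/-- `W₁₁,₂ = {(m,m′,γ,s) ∈ M₁ × M₁ × ΛM₂ × [0,1] : f(m) = γ(0), f(m′) = γ(s)}`. -/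
abbrev W112 (f : C(M₁, M₂)) : Type :=
  {q : M₁ × M₁ × LoopSp M₂ × unitInterval // f q.1 = q.2.2.1.1 0 ∧ f q.2.1 = q.2.2.1.1 q.2.2.2}

/-- `Dᵏ`: the closed ball of radius `ε` centered at `0` in `ℝᵏ`. -/
abbrev Dball (k : ℕ) (ε : ℝ) : Type :=
  (Metric.closedBall (0 : EuclideanSpace ℝ (Fin k)) ε : Set (EuclideanSpace ℝ (Fin k)))

/-- `B₁₁,₂ = {(m,m,γ,s) ∈ W₁₁,₂ : γ = [f(m)] or s ∈ {0,1}}`. -/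
def B112 (f : C(M₁, M₂)) : Set (W112 f) :=
  {q | q.1.1 = q.1.2.1 ∧
    (q.1.2.2.1 = constLoop (f q.1.1) ∨ q.1.2.2.2 = 0 ∨ q.1.2.2.2 = 1)}

/-- `B̄₁,₂ = {(m,γ,s,e(m)) ∈ Λ₁,₂ × [0,1] × Dᵏ : γ = [f(m)] or s ∈ {0,1}}`. -/
def Bbar12 (f : C(M₁, M₂)) {k : ℕ} {ε : ℝ} (e : C(M₁, Dball k ε)) :
    Set (Lam12 f × unitInterval × Dball k ε) :=
  {z | z.2.2 = e z.1.1.1 ∧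
    (z.1.1.2 = constLoop (f z.1.1.1) ∨ z.2.1 = 0 ∨ z.2.1 = 1)}

/-- `v : C(Y,X)` is a homotopy inverse of `u : C(X,Y)` as maps of pairs
`(X,A) → (Y,B)`, through homotopies preserving `A` (resp. `B`) at all times. -/
def IsPairHomotopyInverse {X Y : Type} [TopologicalSpace X] [TopologicalSpace Y]
    (A : Set X) (B : Set Y) (u : C(X, Y)) (v : C(Y, X)) : Prop :=
  Set.MapsTo u A B ∧ Set.MapsTo v B A ∧
  (∃ H : C(X × unitInterval, X),
    (∀ x, H (x, 0) = v (u x)) ∧ (∀ x, H (x, 1) = x) ∧ ∀ x ∈ A, ∀ t, H (x, t) ∈ A) ∧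
  (∃ H : C(Y × unitInterval, Y),
    (∀ y, H (y, 0) = u (v y)) ∧ (∀ y, H (y, 1) = y) ∧ ∀ y ∈ B, ∀ t, H (y, t) ∈ B)

/-- The space `X₂ = {(m,γ,s,x) ∈ Λ₁,₂ × [0,1] × Dᵏ : (γ(s),x) ∈ ν_e(N)}`. -/
abbrev X2space (f : C(M₁, M₂)) {k : ℕ} {ε : ℝ}
    (F : Type) [NormedAddCommGroup F] [NormedSpace ℝ F]
    (E : M₁ → Type) [∀ m, TopologicalSpace (E m)]
    [TopologicalSpace (Bundle.TotalSpace F E)]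
    (νe : C(Bundle.TotalSpace F E, M₂ × Dball k ε)) : Type :=
  {z : Lam12 f × unitInterval × Dball k ε //
    (z.1.1.2.1 z.2.1, z.2.2) ∈ Set.range νe}

open Set Filter Topology

section helpers
variable {D Z M : Type} [TopologicalSpace D] [TopologicalSpace Z] [TopologicalSpace M]

theorem cwa_comp_squeeze (G : Z × ℝ → M) (hG : Continuous G)
    (ζ : D → Z) (hζ : Continuous ζ) (arg lo hi : D → ℝ)
    (hlo : Continuous lo) (hhi : Continuous hi)
    (S : Set D) (hbound : ∀ p ∈ S, arg p ∈ Icc (lo p) (hi p)) (p₀ : D) (hp₀ : p₀ ∈ S)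
    (hpinch : lo p₀ = hi p₀) :
    ContinuousWithinAt (fun p => G (ζ p, arg p)) S p₀ := by
  have harg0 : arg p₀ = lo p₀ := le_antisymm (hpinch ▸ (hbound p₀ hp₀).2) (hbound p₀ hp₀).1
  have h2 : Tendsto arg (𝓝[S] p₀) (𝓝 (lo p₀)) := by
    apply tendsto_of_tendsto_of_tendsto_of_le_of_le'
      ((hlo.tendsto p₀).mono_left nhdsWithin_le_nhds)
      (hpinch ▸ (hhi.tendsto p₀).mono_left nhdsWithin_le_nhds)
    · exact eventually_nhdsWithin_of_forall (fun p hp => (hbound p hp).1)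
    · exact eventually_nhdsWithin_of_forall (fun p hp => (hbound p hp).2)
  have h1 : Tendsto (fun p => (ζ p, arg p)) (𝓝[S] p₀) (𝓝 (ζ p₀, lo p₀)) :=
    (((hζ.tendsto p₀).mono_left nhdsWithin_le_nhds).prodMk_nhds h2)
  have := (hG.continuousAt (x := (ζ p₀, lo p₀))).tendsto.comp h1
  simpa [ContinuousWithinAt, harg0, Function.comp_def] using this

theorem ca_comp_const (Pc : Z → C(unitInterval, M)) (hPc : Continuous Pc)
    (ζ : D → Z) (hζ : Continuous ζ) (arg : D → unitInterval) (p₀ : D) {c : M}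
    (hconst : ∀ v, Pc (ζ p₀) v = c) :
    ContinuousAt (fun p => Pc (ζ p) (arg p)) p₀ := by
  intro V hV
  simp only [] at hV
  rw [hconst (arg p₀)] at hV
  obtain ⟨V', hV'V, hV'open, hcV'⟩ := mem_nhds_iff.mp hV
  have hO : IsOpen {g : C(unitInterval, M) | MapsTo g Set.univ V'} :=
    ContinuousMap.isOpen_setOf_mapsTo isCompact_univ hV'open
  have hmem : Pc (ζ p₀) ∈ {g : C(unitInterval, M) | MapsTo g Set.univ V'} := by
    intro v _; rw [hconst v]; exact hcV'
  have : ∀ᶠ p in 𝓝 p₀, Pc (ζ p) ∈ {g : C(unitInterval, M) | MapsTo g Set.univ V'} :=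
    (hPc.comp hζ).continuousAt.eventually_mem (hO.mem_nhds hmem)
  exact mem_map.mpr (this.mono (fun p hp => hV'V (hp (mem_univ (arg p)))))

end helpers
set_option autoImplicit false
set_option linter.unusedSectionVars false
set_option linter.deprecated false
set_option maxHeartbeats 1000000
section HEaux
open Set Filter Topology Bundle

variable {M₁ M₂ : Type} [TopologicalSpace M₁] [TopologicalSpace M₂]
  {f : C(M₁, M₂)} {k : ℕ} {ε : ℝ}
  {F : Type} [NormedAddCommGroup F] [NormedSpace ℝ F]
  {E : M₁ → Type} [∀ m, TopologicalSpace (E m)]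
  [∀ m, AddCommGroup (E m)] [∀ m, Module ℝ (E m)]
  [TopologicalSpace (Bundle.TotalSpace F E)]
  [FiberBundle F E] [VectorBundle ℝ F E]
  {νe : C(Bundle.TotalSpace F E, M₂ × Dball k ε)} {e : C(M₁, Dball k ε)}

/-- smul on the total space of a vector bundle is continuous. -/
theorem continuous_smul_total :
    Continuous fun p : ℝ × Bundle.TotalSpace F E =>
      (Bundle.TotalSpace.mk p.2.proj (p.1 • p.2.2) : Bundle.TotalSpace F E) := by
  rw [continuous_iff_continuousAt]
  rintro ⟨c₀, n₀⟩
  set tr := trivializationAt F E n₀.proj with htr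
  have hb₀ : n₀ ∈ tr.source := FiberBundle.mem_trivializationAt_proj_source
  have hopen : IsOpen ((Set.univ : Set ℝ) ×ˢ tr.source) := isOpen_univ.prod tr.open_source
  have hmem : (c₀, n₀) ∈ (Set.univ : Set ℝ) ×ˢ tr.source := ⟨trivial, hb₀⟩
  have hinner : ContinuousOn
      (fun p : ℝ × Bundle.TotalSpace F E => (p.2.proj, p.1 • (tr p.2).2))
      ((Set.univ : Set ℝ) ×ˢ tr.source) := by
    apply ContinuousOn.prodMk
    · exact (FiberBundle.continuous_proj F E).comp_continuousOn continuousOn_snd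
    · apply ContinuousOn.smul continuousOn_fst
      exact (continuous_snd.comp_continuousOn (tr.continuousOn.comp continuousOn_snd
        (fun p hp => hp.2)))
  have hφ : ContinuousOn
      (fun p : ℝ × Bundle.TotalSpace F E =>
        (Bundle.TotalSpace.mk p.2.proj (tr.symm p.2.proj (p.1 • (tr p.2).2)) :
          Bundle.TotalSpace F E))
      ((Set.univ : Set ℝ) ×ˢ tr.source) :=
    tr.continuousOn_symm.comp hinner (fun p hp => ⟨tr.mem_source.mp hp.2, trivial⟩)
  have heq : Set.EqOn
      (fun p : ℝ × Bundle.TotalSpace F E =>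
        (Bundle.TotalSpace.mk p.2.proj (p.1 • p.2.2) : Bundle.TotalSpace F E))
      (fun p : ℝ × Bundle.TotalSpace F E =>
        (Bundle.TotalSpace.mk p.2.proj (tr.symm p.2.proj (p.1 • (tr p.2).2)) :
          Bundle.TotalSpace F E))
      ((Set.univ : Set ℝ) ×ˢ tr.source) := by
    rintro ⟨c, n⟩ ⟨-, hn⟩
    have hb : n.proj ∈ tr.baseSet := tr.mem_source.mp hn
    have h1 : tr.symm n.proj (c • (tr n).2) = c • tr.symm n.proj ((tr n).2) := by
      rw [← tr.coe_symmₗ (R := ℝ) hb]; exact map_smul _ c _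
    simp only [h1, tr.symm_proj_apply n hb]
  exact ((hφ.congr heq).continuousAt (hopen.mem_nhds hmem))

/-! ### Accessors -/

def Xm (z : X2space f F E νe) : M₁ := z.1.1.1.1
def Xγ (z : X2space f F E νe) : C(unitInterval, M₂) := z.1.1.1.2.1
def Xγl (z : X2space f F E νe) : LoopSp M₂ := z.1.1.1.2
def Xs (z : X2space f F E νe) : unitInterval := z.1.2.1
def Xx (z : X2space f F E νe) : Dball k ε := z.1.2.2

lemma X0 (z : X2space f F E νe) : f (Xm z) = Xγ z 0 := z.1.1.2
lemma Xloop (z : X2space f F E νe) : Xγ z 0 = Xγ z 1 := z.1.1.1.2.2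
lemma Xrange (z : X2space f F E νe) : (Xγ z (Xs z), Xx z) ∈ Set.range νe := z.2

lemma continuous_Xm : Continuous (Xm (f := f) (F := F) (E := E) (νe := νe)) := by
  exact continuous_fst.comp ((continuous_subtype_val.comp (continuous_fst.comp
    continuous_subtype_val)))
lemma continuous_Xγ : Continuous (Xγ (f := f) (F := F) (E := E) (νe := νe)) := by
  exact continuous_subtype_val.comp (continuous_snd.comp ((continuous_subtype_val.comp
    (continuous_fst.comp continuous_subtype_val))))
lemma continuous_Xs : Continuous (Xs (f := f) (F := F) (E := E) (νe := νe)) := by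
  exact continuous_fst.comp (continuous_snd.comp continuous_subtype_val)
lemma continuous_Xx : Continuous (Xx (f := f) (F := F) (E := E) (νe := νe)) := by
  exact continuous_snd.comp (continuous_snd.comp continuous_subtype_val)

/-- value of the loop at the marked point -/
def gs (z : X2space f F E νe) : M₂ := Xγ z (Xs z)

lemma continuous_gs : Continuous (gs (f := f) (F := F) (E := E) (νe := νe)) :=
  continuous_eval.comp (continuous_Xγ.prodMk continuous_Xs)

/-! ### the inverse of the tubular embedding -/

noncomputable def nmap (hνe : Topology.IsEmbedding νe) (z : X2space f F E νe) :
    Bundle.TotalSpace F E :=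
  (Topology.IsEmbedding.toHomeomorph hνe).symm ⟨(gs z, Xx z), Xrange z⟩

variable (hνe : Topology.IsEmbedding νe)

lemma nmap_spec (z : X2space f F E νe) : νe (nmap hνe z) = (gs z, Xx z) := by
  have := (Topology.IsEmbedding.toHomeomorph hνe).apply_symm_apply ⟨(gs z, Xx z), Xrange z⟩
  exact congrArg Subtype.val this

lemma continuous_nmap : Continuous (nmap (f := f) hνe) :=
  (Topology.IsEmbedding.toHomeomorph hνe).symm.continuous.comp
    (Continuous.subtype_mk (continuous_gs.prodMk continuous_Xx) _)

/-! ### scaling -/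

variable (hzero : ∀ m : M₁, νe (Bundle.TotalSpace.mk m 0) = (f m, e m))


noncomputable def scl (z : X2space f F E νe) (c : ℝ) : M₂ × Dball k ε :=
  νe (Bundle.TotalSpace.mk (nmap hνe z).proj (c • (nmap hνe z).2))

lemma continuous_scl : Continuous fun p : X2space f F E νe × ℝ => scl hνe p.1 p.2 :=
  νe.continuous.comp (continuous_smul_total.comp
    (continuous_snd.prodMk ((continuous_nmap hνe).comp continuous_fst)))

lemma scl_one (z : X2space f F E νe) : scl hνe z 1 = (gs z, Xx z) := by
  have h : (Bundle.TotalSpace.mk (nmap hνe z).proj ((1:ℝ) • (nmap hνe z).2) :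
      Bundle.TotalSpace F E) = nmap hνe z := by
    rw [one_smul]
  rw [scl, h, nmap_spec]

include hzero in
lemma scl_ndeg {z : X2space f F E νe} (m : M₁) (hN : nmap hνe z = Bundle.TotalSpace.mk m 0) (c : ℝ) :
    scl hνe z c = (f m, e m) := by
  rw [scl, hN]
  show νe (Bundle.TotalSpace.mk m (c • (0 : E m))) = _
  rw [smul_zero, hzero]

include hzero in
lemma scl_zero (z : X2space f F E νe) :
    scl hνe z 0 = (f (nmap hνe z).proj, e (nmap hνe z).proj) := by
  rw [scl, zero_smul, hzero]

noncomputable def P (z : X2space f F E νe) (c : ℝ) : M₂ := (scl hνe z c).1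

lemma continuous_P : Continuous fun p : X2space f F E νe × ℝ => P hνe p.1 p.2 :=
  continuous_fst.comp (continuous_scl hνe)

noncomputable def G (z : X2space f F E νe) (c : ℝ) : M₂ :=
  Xγ z (Set.projIcc 0 1 zero_le_one c)

lemma continuous_G : Continuous fun p : X2space f F E νe × ℝ => G p.1 p.2 := by
  have h : Continuous fun p : X2space f F E νe × ℝ =>
      ((Xγ p.1 : C(unitInterval, M₂)), Set.projIcc (0:ℝ) 1 zero_le_one p.2) :=
    (continuous_Xγ.comp continuous_fst).prodMk (continuous_projIcc.comp continuous_snd)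
  exact continuous_eval.comp h

lemma G_of_mem {z : X2space f F E νe} {c : ℝ} (hc : c ∈ Set.Icc (0:ℝ) 1) :
    G z c = Xγ z ⟨c, hc⟩ := by rw [G, Set.projIcc_of_mem]

lemma G_coe (z : X2space f F E νe) (v : unitInterval) : G z ↑v = Xγ z v := by
  rw [G, Set.projIcc_val]

lemma G_zero (z : X2space f F E νe) : G z 0 = Xγ z 0 := G_coe z 0
lemma G_one (z : X2space f F E νe) : G z 1 = Xγ z 1 := G_coe z 1

/-- `n` degenerate: the tube point is the zero section over `Xm z`. -/
def Ndeg (z : X2space f F E νe) : Prop :=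
  nmap hνe z = Bundle.TotalSpace.mk (Xm z) 0

include hzero in
lemma nmap_zero_of {z : X2space f F E νe} (h2 : gs z = f (Xm z)) (h1 : Xx z = e (Xm z)) :
    Ndeg hνe z := by
  apply hνe.injective
  show νe _ = νe _
  rw [nmap_spec, hzero, h2, h1]

include hzero in
lemma P_of_ndeg {z : X2space f F E νe} (hN : Ndeg hνe z) (c : ℝ) :
    P hνe z c = f (Xm z) := by rw [P, scl_ndeg hνe hzero _ hN]

lemma P_one (z : X2space f F E νe) : P hνe z 1 = gs z := by rw [P, scl_one]

/-! ### real-valued control functions -/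

noncomputable def sr (z : X2space f F E νe) : ℝ := (Xs z : ℝ)

noncomputable def lam (e : C(M₁, Dball k ε)) (z : X2space f F E νe) : ℝ :=
  min 1 (max 0
    (‖((Xx z : EuclideanSpace ℝ (Fin k)) - (e (Xm z) : EuclideanSpace ℝ (Fin k)))‖ / ε))

noncomputable def sig (e : C(M₁, Dball k ε)) (z : X2space f F E νe) : ℝ :=
  (1 - lam e z) * sr z + lam e z / 2

noncomputable def tb (t : ℝ) : ℝ := min 1 (max 0 t)

noncomputable def sigt (e : C(M₁, Dball k ε)) (z : X2space f F E νe) (t : ℝ) : ℝ :=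
  (1 - tb t) * sig e z + tb t * sr z

noncomputable def wd (e : C(M₁, Dball k ε)) (z : X2space f F E νe) (t : ℝ) : ℝ :=
  (1 - tb t) * min (sigt e z t) (1 - sigt e z t) / 2

noncomputable def d1 (e : C(M₁, Dball k ε)) (z : X2space f F E νe) (t : ℝ) : ℝ :=
  sigt e z t - wd e z t

lemma continuous_sr : Continuous (sr (f := f) (F := F) (E := E) (νe := νe)) :=
  continuous_subtype_val.comp continuous_Xs

variable (e) in
lemma continuous_lam : Continuous (lam (f := f) (F := F) (E := E) (νe := νe) e) := by
  apply Continuous.min continuous_const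
  apply Continuous.max continuous_const
  apply Continuous.div_const
  exact (Continuous.norm (Continuous.sub (continuous_subtype_val.comp continuous_Xx)
    (continuous_subtype_val.comp (e.continuous.comp continuous_Xm))))

lemma continuous_tb : Continuous tb :=
  continuous_const.min (continuous_const.max continuous_id)

lemma sr_mem (z : X2space f F E νe) : sr z ∈ Set.Icc (0:ℝ) 1 := (Xs z).2
lemma lam_mem (z : X2space f F E νe) : lam e z ∈ Set.Icc (0:ℝ) 1 :=
  ⟨le_min zero_le_one (le_max_left _ _), min_le_left _ _⟩
lemma tb_mem (t : ℝ) : tb t ∈ Set.Icc (0:ℝ) 1 :=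
  ⟨le_min zero_le_one (le_max_left 0 t), min_le_left _ _⟩

lemma sig_mem (z : X2space f F E νe) : sig e z ∈ Set.Icc (0:ℝ) 1 := by
  have h1 := sr_mem z; have h2 := lam_mem (e := e) z
  constructor
  · have := mul_nonneg (sub_nonneg.2 h2.2) h1.1
    rw [sig]; linarith [h2.1]
  · have : (1 - lam e z) * sr z ≤ (1 - lam e z) * 1 :=
      mul_le_mul_of_nonneg_left h1.2 (sub_nonneg.2 h2.2)
    rw [sig]; linarith [h2.1]

lemma sigt_mem (z : X2space f F E νe) (t : ℝ) : sigt e z t ∈ Set.Icc (0:ℝ) 1 := by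
  have h1 := sr_mem z; have h2 := sig_mem (e := e) z; have h3 := tb_mem t
  constructor
  · have := mul_nonneg (sub_nonneg.2 h3.2) h2.1
    have := mul_nonneg h3.1 h1.1
    rw [sigt]; linarith
  · have ha : (1 - tb t) * sig e z ≤ (1 - tb t) * 1 :=
      mul_le_mul_of_nonneg_left h2.2 (sub_nonneg.2 h3.2)
    have hb : tb t * sr z ≤ tb t * 1 := mul_le_mul_of_nonneg_left h1.2 h3.1
    rw [sigt]; linarith

lemma wd_nonneg (z : X2space f F E νe) (t : ℝ) : 0 ≤ wd e z t := by
  have h1 := sigt_mem (e := e) z t; have h3 := tb_mem t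
  have : 0 ≤ min (sigt e z t) (1 - sigt e z t) := le_min h1.1 (by linarith [h1.2])
  rw [wd]; nlinarith [h3.2]

lemma wd_le_left (z : X2space f F E νe) (t : ℝ) : wd e z t ≤ sigt e z t / 2 := by
  have h3 := tb_mem t
  have h4 : min (sigt e z t) (1 - sigt e z t) ≤ sigt e z t := min_le_left _ _
  have h5 : 0 ≤ min (sigt e z t) (1 - sigt e z t) :=
    le_min (sigt_mem z t).1 (by linarith [(sigt_mem (e := e) z t).2])
  rw [wd]; nlinarith [h3.1, h3.2]

lemma wd_le_right (z : X2space f F E νe) (t : ℝ) : wd e z t ≤ (1 - sigt e z t) / 2 := by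
  have h3 := tb_mem t
  have h4 : min (sigt e z t) (1 - sigt e z t) ≤ 1 - sigt e z t := min_le_right _ _
  have h5 : 0 ≤ min (sigt e z t) (1 - sigt e z t) :=
    le_min (sigt_mem z t).1 (by linarith [(sigt_mem (e := e) z t).2])
  rw [wd]; nlinarith [h3.1, h3.2]

lemma d1_nonneg (z : X2space f F E νe) (t : ℝ) : 0 ≤ d1 e z t := by
  have := wd_le_left (e := e) z t; have := (sigt_mem (e := e) z t).1; rw [d1]; linarith

lemma d1_le (z : X2space f F E νe) (t : ℝ) : d1 e z t ≤ sigt e z t := by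
  have := wd_nonneg (e := e) z t; rw [d1]; linarith

lemma sigtw_le_one (z : X2space f F E νe) (t : ℝ) : sigt e z t + wd e z t ≤ 1 := by
  have := wd_le_right (e := e) z t; have := (sigt_mem (e := e) z t).2; linarith

lemma d1_eq_zero {z : X2space f F E νe} {t : ℝ} (h : d1 e z t = 0) : sigt e z t = 0 := by
  have h1 := wd_le_left (e := e) z t
  have h2 := (sigt_mem (e := e) z t).1
  rw [d1] at h; linarith

lemma sigtw_eq_one {z : X2space f F E νe} {t : ℝ} (h : sigt e z t + wd e z t = 1) :
    sigt e z t = 1 := by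
  have h1 := wd_le_right (e := e) z t
  have h2 := (sigt_mem (e := e) z t).2
  linarith

lemma tb_zero : tb 0 = 0 := by norm_num [tb]
lemma tb_one : tb 1 = 1 := by norm_num [tb]

lemma sigt_at_zero (z : X2space f F E νe) : sigt e z 0 = sig e z := by
  rw [sigt, tb_zero]; ring

lemma sigt_at_one (z : X2space f F E νe) : sigt e z 1 = sr z := by
  rw [sigt, tb_one]; ring

/-! ### degeneracy lemmas -/

lemma Xx_of_lam (hε : 0 < ε) {z : X2space f F E νe} (h : lam e z = 0) :
    Xx z = e (Xm z) := by
  rw [lam] at h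
  have h1 : max 0 (‖((Xx z : EuclideanSpace ℝ (Fin k)) -
      (e (Xm z) : EuclideanSpace ℝ (Fin k)))‖ / ε) = 0 := by
    rcases min_eq_iff.mp h with h' | h'
    · linarith [h'.1]
    · exact h'.1
  have h2 : ‖((Xx z : EuclideanSpace ℝ (Fin k)) -
      (e (Xm z) : EuclideanSpace ℝ (Fin k)))‖ / ε ≤ 0 := by
    by_contra hc
    push_neg at hc
    rw [max_eq_right hc.le] at h1
    linarith
  have h3 : ‖((Xx z : EuclideanSpace ℝ (Fin k)) -
      (e (Xm z) : EuclideanSpace ℝ (Fin k)))‖ ≤ 0 := by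
    by_contra hc
    push_neg at hc
    have := div_pos hc hε
    linarith
  have h4 : ((Xx z : EuclideanSpace ℝ (Fin k)) - (e (Xm z) : EuclideanSpace ℝ (Fin k))) = 0 :=
    norm_le_zero_iff.mp h3
  exact Subtype.ext (sub_eq_zero.mp h4)

lemma lam_of_Xx {z : X2space f F E νe} (h : Xx z = e (Xm z)) : lam e z = 0 := by
  rw [lam]
  have : ((Xx z : EuclideanSpace ℝ (Fin k)) - (e (Xm z) : EuclideanSpace ℝ (Fin k))) = 0 := by
    rw [h]; exact sub_self _
  rw [this, norm_zero, zero_div, max_self, min_eq_right zero_le_one]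

lemma sig_eq_zero {z : X2space f F E νe} (h : sig e z = 0) : lam e z = 0 ∧ sr z = 0 := by
  have h1 := sr_mem (νe := νe) z; have h2 := lam_mem (e := e) z
  rw [sig] at h
  have hmul : 0 ≤ (1 - lam e z) * sr z := mul_nonneg (by linarith [h2.2]) h1.1
  have hlam : lam e z = 0 := by linarith [h2.1]
  refine ⟨hlam, ?_⟩
  rw [hlam] at h; nlinarith

lemma sig_eq_one {z : X2space f F E νe} (h : sig e z = 1) : lam e z = 0 ∧ sr z = 1 := by
  have h1 := sr_mem (νe := νe) z; have h2 := lam_mem (e := e) z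
  rw [sig] at h
  have hmul : (1 - lam e z) * sr z ≤ (1 - lam e z) * 1 :=
    mul_le_mul_of_nonneg_left h1.2 (by linarith [h2.2])
  have hlam : lam e z = 0 := by nlinarith [h2.1]
  refine ⟨hlam, ?_⟩
  rw [hlam] at h; nlinarith

lemma Xs_of_sr_zero {z : X2space f F E νe} (h : sr z = 0) : Xs z = 0 := Subtype.ext h
lemma Xs_of_sr_one {z : X2space f F E νe} (h : sr z = 1) : Xs z = 1 := Subtype.ext h

lemma gs_of_sr_zero {z : X2space f F E νe} (h : sr z = 0) : gs z = f (Xm z) := by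
  rw [gs, Xs_of_sr_zero h, ← X0]

lemma gs_of_sr_one {z : X2space f F E νe} (h : sr z = 1) : gs z = f (Xm z) := by
  rw [gs, Xs_of_sr_one h, ← Xloop, ← X0]

include hzero in
lemma ndeg_of (hε : 0 < ε) {z : X2space f F E νe} (hlam : lam e z = 0)
    (hsr : sr z = 0 ∨ sr z = 1) : Ndeg hνe z := by
  apply nmap_zero_of hνe hzero
  · rcases hsr with h | h
    · exact gs_of_sr_zero h
    · exact gs_of_sr_one h
  · exact Xx_of_lam hε hlam

include hzero in
lemma gs_of_ndeg {z : X2space f F E νe} (hN : Ndeg hνe z) :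
    gs z = f (Xm z) ∧ Xx z = e (Xm z) := by
  have h := nmap_spec hνe z
  rw [hN, hzero] at h
  exact ⟨(congrArg Prod.fst h).symm, (congrArg Prod.snd h).symm⟩

lemma sigt_eq_zero_sr {z : X2space f F E νe} {t : ℝ} (h : sigt e z t = 0) : sr z = 0 := by
  have h1 := sr_mem (νe := νe) z; have h2 := sig_mem (e := e) z; have h3 := tb_mem t
  rw [sigt] at h
  have hm1 : 0 ≤ (1 - tb t) * sig e z := mul_nonneg (by linarith [h3.2]) h2.1
  have hm2 : 0 ≤ tb t * sr z := mul_nonneg h3.1 h1.1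
  rcases eq_or_lt_of_le h3.2 with ht | ht
  · -- tb t = 1
    rw [← ht] at h; nlinarith
  · have hσ : sig e z = 0 := by nlinarith
    exact (sig_eq_zero hσ).2

lemma sigt_eq_one_sr {z : X2space f F E νe} {t : ℝ} (h : sigt e z t = 1) : sr z = 1 := by
  have h1 := sr_mem (νe := νe) z; have h2 := sig_mem (e := e) z; have h3 := tb_mem t
  rw [sigt] at h
  rcases eq_or_lt_of_le h3.2 with ht | ht
  · rw [← ht] at h; nlinarith
  · have hm1 : (1 - tb t) * sig e z ≤ (1 - tb t) * 1 :=
      mul_le_mul_of_nonneg_left h2.2 (by linarith)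
    have hm2 : tb t * sr z ≤ tb t * 1 := mul_le_mul_of_nonneg_left h1.2 h3.1
    have hσ : sig e z = 1 := by nlinarith
    have hs := (sig_eq_one hσ).2
    exact hs

include hzero in
lemma sigt_ndeg (hε : 0 < ε) {z : X2space f F E νe} {t : ℝ}
    (h : sigt e z t = 0 ∨ sigt e z t = 1) (ht : tb t ≠ 1) : Ndeg hνe z := by
  have h1 := sr_mem (νe := νe) z; have h2 := sig_mem (e := e) z; have h3 := tb_mem t
  have ht' : tb t < 1 := lt_of_le_of_ne h3.2 ht
  rcases h with h | h
  · rw [sigt] at h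
    have hm1 : 0 ≤ (1 - tb t) * sig e z := mul_nonneg (by linarith) h2.1
    have hm2 : 0 ≤ tb t * sr z := mul_nonneg h3.1 h1.1
    have hσ : sig e z = 0 := by nlinarith
    obtain ⟨hl, hs⟩ := sig_eq_zero hσ
    exact ndeg_of hνe hzero hε hl (Or.inl hs)
  · rw [sigt] at h
    have hm1 : (1 - tb t) * sig e z ≤ (1 - tb t) * 1 :=
      mul_le_mul_of_nonneg_left h2.2 (by linarith)
    have hm2 : tb t * sr z ≤ tb t * 1 := mul_le_mul_of_nonneg_left h1.2 h3.1
    have hσ : sig e z = 1 := by nlinarith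
    obtain ⟨hl, hs⟩ := sig_eq_one hσ
    exact ndeg_of hνe hzero hε hl (Or.inr hs)

lemma wd_eq_zero_cases {z : X2space f F E νe} {t : ℝ} (h : wd e z t = 0) :
    tb t = 1 ∨ sigt e z t = 0 ∨ sigt e z t = 1 := by
  rw [wd] at h
  rcases mul_eq_zero.mp (by linarith : (1 - tb t) * min (sigt e z t) (1 - sigt e z t) = 0)
    with h' | h'
  · left; linarith
  · right
    rcases min_eq_iff.mp h' with h'' | h''
    · left; exact h''.1
    · right; linarith [h''.1]

lemma sigt_of_tb1 {z : X2space f F E νe} {t : ℝ} (h : tb t = 1) : sigt e z t = sr z := by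
  rw [sigt, h]; ring

lemma wd_of_tb1 {z : X2space f F E νe} {t : ℝ} (h : tb t = 1) : wd e z t = 0 := by
  rw [wd, h]; ring

lemma d1_pos_of_wd_pos {z : X2space f F E νe} {t : ℝ} (h : 0 < wd e z t) :
    0 < d1 e z t := by
  have h1 := wd_le_left (e := e) z t
  rw [d1]; linarith

/-! ### the master map -/

variable (e) in
noncomputable def T (z : X2space f F E νe) (t u : ℝ) : M₂ :=
  if u ≤ d1 e z t then G z (sr z * u / d1 e z t)
  else if u ≤ sigt e z t then P hνe z (1 - (1 - tb t) * ((u - d1 e z t) / wd e z t))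
  else if u ≤ sigt e z t + wd e z t then
    P hνe z (tb t + (1 - tb t) * ((u - sigt e z t) / wd e z t))
  else G z (sr z + (1 - sr z) * ((u - (sigt e z t + wd e z t)) / (1 - (sigt e z t + wd e z t))))

lemma G_sr (z : X2space f F E νe) : G z (sr z) = gs z := by
  rw [G_of_mem (sr_mem z), gs]
  congr 1

lemma T_zero (z : X2space f F E νe) (t : ℝ) : T e hνe z t 0 = Xγ z 0 := by
  rw [T, if_pos (d1_nonneg (e := e) z t), mul_zero, zero_div, G_zero]

lemma T_one (z : X2space f F E νe) (t : ℝ) : T e hνe z t 1 = Xγ z 1 := by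
  by_cases h1 : (1:ℝ) ≤ d1 e z t
  · have hd : d1 e z t = 1 := le_antisymm (by
      have := d1_le (e := e) z t; have := (sigt_mem (e := e) z t).2; linarith) h1
    have hσ : sigt e z t = 1 := by
      have h2 := wd_nonneg (e := e) z t; have h3 := (sigt_mem (e := e) z t).2
      rw [d1] at hd; linarith
    have hs : sr z = 1 := sigt_eq_one_sr hσ
    rw [T, if_pos h1, hd, hs, div_one, mul_one, G_one]
  · have h2 : ¬ (1:ℝ) ≤ sigt e z t := by
      intro hc
      have hσ : sigt e z t = 1 := le_antisymm (sigt_mem (e := e) z t).2 hc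
      have hw : wd e z t ≤ 0 := by have := wd_le_right (e := e) z t; linarith
      have hw' : wd e z t = 0 := le_antisymm hw (wd_nonneg z t)
      exact h1 (by rw [d1, hσ, hw']; norm_num)
    have h3 : ¬ (1:ℝ) ≤ sigt e z t + wd e z t := by
      intro hc
      have hσ : sigt e z t = 1 := sigtw_eq_one (le_antisymm (sigtw_le_one z t) hc)
      exact h2 (le_of_eq hσ.symm)
    rw [T, if_neg h1, if_neg h2, if_neg h3]
    have hd : 1 - (sigt e z t + wd e z t) ≠ 0 := by push_neg at h3; linarith
    rw [div_self hd, mul_one]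
    rw [show sr z + (1 - sr z) = 1 by ring, G_one]


lemma G_cancel {z : X2space f F E νe} {c : ℝ} (hc : c = 0 → sr z = 0) :
    G z (sr z * c / c) = gs z := by
  by_cases h : c = 0
  · rw [h, mul_zero, zero_div, G_zero, gs, Xs_of_sr_zero (hc h)]
  · rw [mul_div_assoc, div_self h, mul_one, G_sr]

include hzero in
lemma P_tb_eq_gs (hε : 0 < ε) {z : X2space f F E νe} {t : ℝ} (hw : wd e z t = 0) :
    P hνe z (tb t) = gs z := by
  by_cases ht : tb t = 1
  · rw [ht, P_one]
  · have hN := sigt_ndeg hνe hzero hε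
      (by rcases wd_eq_zero_cases hw with h | h; exact absurd h ht; exact h) ht
    rw [P_of_ndeg hνe hzero hN, (gs_of_ndeg hνe hzero hN).1]

include hzero in
lemma T_mark (hε : 0 < ε) (z : X2space f F E νe) (t : ℝ) :
    T e hνe z t (sigt e z t) = P hνe z (tb t) := by
  by_cases hw : wd e z t = 0
  · have hd : d1 e z t = sigt e z t := by rw [d1, hw]; ring
    rw [T, if_pos (le_of_eq hd.symm), hd,
      G_cancel (fun h => sigt_eq_zero_sr h), P_tb_eq_gs hνe hzero hε hw]
  · have hwpos : 0 < wd e z t := lt_of_le_of_ne (wd_nonneg z t) (Ne.symm hw)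
    rw [T, if_neg (by rw [d1]; intro hc; linarith), if_pos le_rfl]
    rw [show sigt e z t - d1 e z t = wd e z t by rw [d1]; ring, div_self hw, mul_one,
      show (1:ℝ) - (1 - tb t) = tb t by ring]

lemma T_id {z : X2space f F E νe} {t : ℝ} (ht : tb t = 1) (v : unitInterval) :
    T e hνe z t ↑v = Xγ z v := by
  have hσ : sigt e z t = sr z := sigt_of_tb1 ht
  have hw : wd e z t = 0 := wd_of_tb1 ht
  have hd : d1 e z t = sr z := by rw [d1, hw, hσ]; ring
  by_cases hv : (v : ℝ) ≤ d1 e z t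
  · rw [T, if_pos hv]
    by_cases hs : sr z = 0
    · have hv0 : (v : ℝ) = 0 := le_antisymm (by rw [hd, hs] at hv; exact hv) v.2.1
      have hvv : v = 0 := Subtype.ext hv0
      rw [hs, zero_mul, zero_div, G_zero, hvv]
    · rw [hd, mul_comm, mul_div_assoc, div_self hs, mul_one, G_coe]
  · rw [T, if_neg hv, if_neg (by rw [hσ, ← hd]; exact hv),
      if_neg (by rw [hσ, hw, add_zero, ← hd]; exact hv)]
    push_neg at hv
    rw [hd] at hv
    have hne : (1 : ℝ) - (sigt e z t + wd e z t) ≠ 0 := by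
      rw [hσ, hw, add_zero]
      have h22 := v.2.2
      intro hc
      rw [sub_eq_zero] at hc
      rw [← hc] at hv
      linarith
    rw [hσ, hw, add_zero] at hne ⊢
    have harg : (1 - sr z) * ((↑v - sr z) / (1 - sr z)) = ↑v - sr z := by
      field_simp
    rw [harg, show sr z + ((v : ℝ) - sr z) = (v : ℝ) by ring, G_coe]

include hzero in
lemma T_const {z : X2space f F E νe} (hγ : ∀ v, Xγ z v = f (Xm z)) (hN : Ndeg hνe z)
    (t u : ℝ) : T e hνe z t u = f (Xm z) := by
  rw [T]
  split_ifs <;>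
    first
      | (rw [G]; exact hγ _)
      | (exact P_of_ndeg hνe hzero hN _)

include hzero in
lemma T_eq_b2 (hε : 0 < ε) {z : X2space f F E νe} {t u : ℝ}
    (h1 : d1 e z t ≤ u) (h2 : u ≤ sigt e z t) :
    T e hνe z t u = P hνe z (1 - (1 - tb t) * ((u - d1 e z t) / wd e z t)) := by
  rw [T]
  by_cases hu : u ≤ d1 e z t
  · have hud : u = d1 e z t := le_antisymm hu h1
    rw [if_pos hu, hud, sub_self, zero_div, mul_zero, sub_zero, P_one,
      G_cancel (fun h => sigt_eq_zero_sr (d1_eq_zero h))]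
  · rw [if_neg hu, if_pos h2]

include hzero in
lemma T_eq_b3 (hε : 0 < ε) {z : X2space f F E νe} {t u : ℝ}
    (h1 : sigt e z t ≤ u) (h2 : u ≤ sigt e z t + wd e z t) :
    T e hνe z t u = P hνe z (tb t + (1 - tb t) * ((u - sigt e z t) / wd e z t)) := by
  rw [T]
  by_cases hu : u ≤ d1 e z t
  · have hw : wd e z t = 0 := by
      have ha := wd_nonneg (e := e) z t
      rw [d1] at hu; linarith
    have hud : u = sigt e z t := le_antisymm (hu.trans (d1_le z t)) h1
    have hd : d1 e z t = sigt e z t := by rw [d1, hw]; ring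
    rw [if_pos hu, hud, sub_self, zero_div, mul_zero, add_zero, hd,
      G_cancel (fun h => sigt_eq_zero_sr h), P_tb_eq_gs hνe hzero hε hw]
  · by_cases hu2 : u ≤ sigt e z t
    · have hud : u = sigt e z t := le_antisymm hu2 h1
      rw [if_neg hu, if_pos hu2, hud, sub_self, zero_div, mul_zero, add_zero]
      by_cases hw : wd e z t = 0
      · have h0 : sigt e z t - d1 e z t = 0 := by rw [d1, hw]; ring
        rw [h0, zero_div, mul_zero, sub_zero, P_one, P_tb_eq_gs hνe hzero hε hw]
      · rw [show sigt e z t - d1 e z t = wd e z t by rw [d1]; ring, div_self hw, mul_one,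
          show (1:ℝ) - (1 - tb t) = tb t by ring]
    · rw [if_neg hu, if_neg hu2, if_pos h2]

include hzero in
lemma T_eq_b4 (hε : 0 < ε) {z : X2space f F E νe} {t u : ℝ}
    (h1 : sigt e z t + wd e z t ≤ u) :
    T e hνe z t u = G z (sr z + (1 - sr z) *
      ((u - (sigt e z t + wd e z t)) / (1 - (sigt e z t + wd e z t)))) := by
  rw [T]
  by_cases hu : u ≤ d1 e z t
  · have hw : wd e z t = 0 := by
      have ha := wd_nonneg (e := e) z t
      rw [d1] at hu; linarith
    have hud : u = sigt e z t := by rw [d1, hw, sub_zero] at hu; rw [hw, add_zero] at h1; linarith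
    have hd : d1 e z t = sigt e z t := by rw [d1, hw]; ring
    rw [if_pos hu, hud, hd, G_cancel (fun h => sigt_eq_zero_sr h), hw, add_zero, sub_self,
      zero_div, mul_zero, add_zero, G_sr]
  · by_cases hu2 : u ≤ sigt e z t
    · have hw : wd e z t = 0 := by linarith [wd_nonneg (e := e) z t]
      have hud : u = sigt e z t := le_antisymm hu2 (by linarith [wd_nonneg (e := e) z t])
      have h0 : sigt e z t - d1 e z t = 0 := by rw [d1, hw]; ring
      rw [if_neg hu, if_pos hu2, hud, h0, zero_div, mul_zero, sub_zero, P_one, hw, add_zero,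
        sub_self, zero_div, mul_zero, add_zero, G_sr]
    · by_cases hu3 : u ≤ sigt e z t + wd e z t
      · have hud : u = sigt e z t + wd e z t := le_antisymm hu3 h1
        rw [if_neg hu, if_neg hu2, if_pos hu3, hud,
          show sigt e z t + wd e z t - sigt e z t = wd e z t by ring, sub_self, zero_div,
          mul_zero, add_zero, G_sr]
        by_cases hw : wd e z t = 0
        · rw [hw, div_zero, mul_zero, add_zero, P_tb_eq_gs hνe hzero hε hw]
        · rw [div_self hw, mul_one, show tb t + (1 - tb t) = 1 by ring, P_one]
      · rw [if_neg hu, if_neg hu2, if_neg hu3]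

/-! ### continuity of the master map -/

noncomputable def PcM : C(X2space f F E νe, C(unitInterval, M₂)) :=
  ContinuousMap.curry
    ⟨fun q : X2space f F E νe × unitInterval => P hνe q.1 ↑q.2,
      (continuous_P hνe).comp (continuous_fst.prodMk (continuous_subtype_val.comp
        continuous_snd))⟩

lemma PcM_apply (z : X2space f F E νe) (v : unitInterval) : PcM hνe z v = P hνe z ↑v := rfl

variable (νe) in
def RS : Set (X2space f F E νe × ℝ × ℝ) := {p | 0 ≤ p.2.2 ∧ p.2.2 ≤ 1}

variable (e) in
def Rg1 : Set (X2space f F E νe × ℝ × ℝ) := {p | 0 ≤ p.2.2 ∧ p.2.2 ≤ d1 e p.1 p.2.1}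
variable (e) in
def Rg2 : Set (X2space f F E νe × ℝ × ℝ) :=
  {p | d1 e p.1 p.2.1 ≤ p.2.2 ∧ p.2.2 ≤ sigt e p.1 p.2.1}
variable (e) in
def Rg3 : Set (X2space f F E νe × ℝ × ℝ) :=
  {p | sigt e p.1 p.2.1 ≤ p.2.2 ∧ p.2.2 ≤ sigt e p.1 p.2.1 + wd e p.1 p.2.1}
variable (e) in
def Rg4 : Set (X2space f F E νe × ℝ × ℝ) :=
  {p | sigt e p.1 p.2.1 + wd e p.1 p.2.1 ≤ p.2.2 ∧ p.2.2 ≤ 1}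

lemma contP_sr : Continuous fun p : X2space f F E νe × ℝ × ℝ => sr p.1 :=
  continuous_sr.comp continuous_fst
lemma contP_u : Continuous fun p : X2space f F E νe × ℝ × ℝ => p.2.2 :=
  continuous_snd.comp continuous_snd
lemma contP_tb : Continuous fun p : X2space f F E νe × ℝ × ℝ => tb p.2.1 :=
  continuous_tb.comp (continuous_fst.comp continuous_snd)
variable (e) in
lemma contP_lam : Continuous fun p : X2space f F E νe × ℝ × ℝ => lam e p.1 :=
  (continuous_lam e).comp continuous_fst
variable (e) in
lemma contP_sig : Continuous fun p : X2space f F E νe × ℝ × ℝ => sig e p.1 := by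
  unfold sig
  exact ((continuous_const.sub (contP_lam e)).mul contP_sr).add ((contP_lam e).div_const 2)
variable (e) in
lemma contP_sigt : Continuous fun p : X2space f F E νe × ℝ × ℝ => sigt e p.1 p.2.1 := by
  unfold sigt
  exact ((continuous_const.sub contP_tb).mul (contP_sig e)).add (contP_tb.mul contP_sr)
variable (e) in
lemma contP_wd : Continuous fun p : X2space f F E νe × ℝ × ℝ => wd e p.1 p.2.1 := by
  unfold wd
  exact (((continuous_const.sub contP_tb).mul
    ((contP_sigt e).min (continuous_const.sub (contP_sigt e)))).div_const 2)
variable (e) in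
lemma contP_d1 : Continuous fun p : X2space f F E νe × ℝ × ℝ => d1 e p.1 p.2.1 := by
  unfold d1
  exact (contP_sigt e).sub (contP_wd e)

lemma isClosed_Rg1 : IsClosed (Rg1 (f := f) (νe := νe) e) :=
  (isClosed_le continuous_const contP_u).inter (isClosed_le contP_u (contP_d1 e))
lemma isClosed_Rg2 : IsClosed (Rg2 (f := f) (νe := νe) e) :=
  (isClosed_le (contP_d1 e) contP_u).inter (isClosed_le contP_u (contP_sigt e))
lemma isClosed_Rg3 : IsClosed (Rg3 (f := f) (νe := νe) e) :=
  (isClosed_le (contP_sigt e) contP_u).inter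
    (isClosed_le contP_u ((contP_sigt e).add (contP_wd e)))
lemma isClosed_Rg4 : IsClosed (Rg4 (f := f) (νe := νe) e) :=
  (isClosed_le ((contP_sigt e).add (contP_wd e)) contP_u).inter
    (isClosed_le contP_u continuous_const)

/-- argument bounds for branch 2 -/
lemma b2_arg_mem {p : X2space f F E νe × ℝ × ℝ} (hp : p ∈ Rg2 (f := f) (νe := νe) e) :
    1 - (1 - tb p.2.1) * ((p.2.2 - d1 e p.1 p.2.1) / wd e p.1 p.2.1) ∈
      Set.Icc (tb p.2.1) 1 := by
  obtain ⟨hp1, hp2⟩ := hp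
  have ht := tb_mem p.2.1
  by_cases hw : wd e p.1 p.2.1 = 0
  · rw [hw, div_zero, mul_zero, sub_zero]
    exact ⟨ht.2, le_refl 1⟩
  · have hwpos : 0 < wd e p.1 p.2.1 := lt_of_le_of_ne (wd_nonneg _ _) (Ne.symm hw)
    have hr1 : 0 ≤ (p.2.2 - d1 e p.1 p.2.1) / wd e p.1 p.2.1 :=
      div_nonneg (by linarith) hwpos.le
    have hr2 : (p.2.2 - d1 e p.1 p.2.1) / wd e p.1 p.2.1 ≤ 1 := by
      rw [div_le_one hwpos, d1]; linarith
    constructor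
    · nlinarith [ht.2]
    · nlinarith [ht.2]

/-- argument bounds for branch 3 -/
lemma b3_arg_mem {p : X2space f F E νe × ℝ × ℝ} (hp : p ∈ Rg3 (f := f) (νe := νe) e) :
    tb p.2.1 + (1 - tb p.2.1) * ((p.2.2 - sigt e p.1 p.2.1) / wd e p.1 p.2.1) ∈
      Set.Icc (tb p.2.1) 1 := by
  obtain ⟨hp1, hp2⟩ := hp
  have ht := tb_mem p.2.1
  by_cases hw : wd e p.1 p.2.1 = 0
  · rw [hw, div_zero, mul_zero, add_zero]
    exact ⟨le_refl _, ht.2⟩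
  · have hwpos : 0 < wd e p.1 p.2.1 := lt_of_le_of_ne (wd_nonneg _ _) (Ne.symm hw)
    have hr1 : 0 ≤ (p.2.2 - sigt e p.1 p.2.1) / wd e p.1 p.2.1 :=
      div_nonneg (by linarith) hwpos.le
    have hr2 : (p.2.2 - sigt e p.1 p.2.1) / wd e p.1 p.2.1 ≤ 1 := by
      rw [div_le_one hwpos]; linarith
    constructor
    · nlinarith [ht.2]
    · nlinarith [ht.2]

/-- argument bounds for branch 4 -/
lemma b4_arg_mem {p : X2space f F E νe × ℝ × ℝ} (hp : p ∈ Rg4 (f := f) (νe := νe) e) :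
    sr p.1 + (1 - sr p.1) * ((p.2.2 - (sigt e p.1 p.2.1 + wd e p.1 p.2.1)) /
      (1 - (sigt e p.1 p.2.1 + wd e p.1 p.2.1))) ∈ Set.Icc (sr p.1) 1 := by
  obtain ⟨hp1, hp2⟩ := hp
  have hs := sr_mem (νe := νe) p.1
  by_cases hden : 1 - (sigt e p.1 p.2.1 + wd e p.1 p.2.1) = 0
  · rw [hden, div_zero, mul_zero, add_zero]
    exact ⟨le_refl _, hs.2⟩
  · have hle := sigtw_le_one (e := e) p.1 p.2.1
    have hdpos : 0 < 1 - (sigt e p.1 p.2.1 + wd e p.1 p.2.1) :=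
      lt_of_le_of_ne (by linarith) (Ne.symm hden)
    have hr1 : 0 ≤ (p.2.2 - (sigt e p.1 p.2.1 + wd e p.1 p.2.1)) /
        (1 - (sigt e p.1 p.2.1 + wd e p.1 p.2.1)) := div_nonneg (by linarith) hdpos.le
    have hr2 : (p.2.2 - (sigt e p.1 p.2.1 + wd e p.1 p.2.1)) /
        (1 - (sigt e p.1 p.2.1 + wd e p.1 p.2.1)) ≤ 1 := by
      rw [div_le_one hdpos]; linarith
    constructor
    · nlinarith [hs.2]
    · nlinarith [hs.2]

/-- branch-1 argument bounds -/
lemma b1_arg_mem {p : X2space f F E νe × ℝ × ℝ} (hp : p ∈ Rg1 (f := f) (νe := νe) e) :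
    sr p.1 * p.2.2 / d1 e p.1 p.2.1 ∈ Set.Icc (0:ℝ) (sr p.1) := by
  obtain ⟨hp1, hp2⟩ := hp
  have hs := sr_mem (νe := νe) p.1
  constructor
  · exact div_nonneg (mul_nonneg hs.1 hp1) (d1_nonneg _ _)
  · by_cases hd : d1 e p.1 p.2.1 = 0
    · rw [hd, div_zero]; exact hs.1
    · have hdpos : 0 < d1 e p.1 p.2.1 := lt_of_le_of_ne (d1_nonneg _ _) (Ne.symm hd)
      rw [div_le_iff₀ hdpos]
      nlinarith [hs.1]

lemma contOn_b1 : ContinuousOn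
    (fun p : X2space f F E νe × ℝ × ℝ => G p.1 (sr p.1 * p.2.2 / d1 e p.1 p.2.1))
    (Rg1 (f := f) (νe := νe) e) := by
  intro p₀ hp₀
  by_cases hd : d1 e p₀.1 p₀.2.1 = 0
  · exact cwa_comp_squeeze (fun q => G q.1 q.2) continuous_G Prod.fst continuous_fst
      _ (fun _ => 0) (fun p => sr p.1) continuous_const contP_sr _
      (fun p hp => b1_arg_mem hp) p₀ hp₀
      ((sigt_eq_zero_sr (d1_eq_zero hd)).symm)
  · have harg : ContinuousAt
        (fun p : X2space f F E νe × ℝ × ℝ => sr p.1 * p.2.2 / d1 e p.1 p.2.1) p₀ :=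
      ContinuousAt.div ((contP_sr.mul contP_u).continuousAt) ((contP_d1 e).continuousAt) hd
    exact (continuous_G.continuousAt.comp (continuousAt_fst.prodMk harg)).continuousWithinAt

lemma contOn_b4 : ContinuousOn
    (fun p : X2space f F E νe × ℝ × ℝ => G p.1 (sr p.1 + (1 - sr p.1) *
      ((p.2.2 - (sigt e p.1 p.2.1 + wd e p.1 p.2.1)) /
        (1 - (sigt e p.1 p.2.1 + wd e p.1 p.2.1)))))
    (Rg4 (f := f) (νe := νe) e) := by
  intro p₀ hp₀
  by_cases hd : 1 - (sigt e p₀.1 p₀.2.1 + wd e p₀.1 p₀.2.1) = 0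
  · have hσ : sigt e p₀.1 p₀.2.1 = 1 := sigtw_eq_one (by linarith)
    exact cwa_comp_squeeze (fun q => G q.1 q.2) continuous_G Prod.fst continuous_fst
      _ (fun p => sr p.1) (fun _ => 1) contP_sr continuous_const _
      (fun p hp => b4_arg_mem hp) p₀ hp₀ (sigt_eq_one_sr hσ)
  · have harg : ContinuousAt
        (fun p : X2space f F E νe × ℝ × ℝ => sr p.1 + (1 - sr p.1) *
          ((p.2.2 - (sigt e p.1 p.2.1 + wd e p.1 p.2.1)) /
            (1 - (sigt e p.1 p.2.1 + wd e p.1 p.2.1)))) p₀ := by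
      apply ContinuousAt.add contP_sr.continuousAt
      apply ContinuousAt.mul (continuous_const.sub contP_sr).continuousAt
      exact ContinuousAt.div
        ((contP_u.sub ((contP_sigt e).add (contP_wd e))).continuousAt)
        ((continuous_const.sub ((contP_sigt e).add (contP_wd e))).continuousAt) hd
    exact (continuous_G.continuousAt.comp (continuousAt_fst.prodMk harg)).continuousWithinAt

include hzero in
lemma contOn_b2 (hε : 0 < ε) : ContinuousOn
    (fun p : X2space f F E νe × ℝ × ℝ =>
      P hνe p.1 (1 - (1 - tb p.2.1) * ((p.2.2 - d1 e p.1 p.2.1) / wd e p.1 p.2.1)))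
    (Rg2 (f := f) (νe := νe) e) := by
  intro p₀ hp₀
  by_cases hw : wd e p₀.1 p₀.2.1 = 0
  · by_cases ht : tb p₀.2.1 = 1
    · exact cwa_comp_squeeze (fun q => P hνe q.1 q.2) (continuous_P hνe) Prod.fst
        continuous_fst _ (fun p => tb p.2.1) (fun _ => 1) contP_tb continuous_const _
        (fun p hp => b2_arg_mem hp) p₀ hp₀ ht
    · have hN : Ndeg hνe p₀.1 := sigt_ndeg hνe hzero hε
        (by rcases wd_eq_zero_cases hw with h | h; exact absurd h ht; exact h) ht
      have hca : ContinuousAt (fun p : X2space f F E νe × ℝ × ℝ =>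
          PcM hνe p.1 (Set.projIcc 0 1 zero_le_one
            (1 - (1 - tb p.2.1) * ((p.2.2 - d1 e p.1 p.2.1) / wd e p.1 p.2.1)))) p₀ :=
        ca_comp_const _ (PcM hνe).continuous _ continuous_fst _ p₀
          (fun v => by rw [PcM_apply, P_of_ndeg hνe hzero hN])
      apply hca.continuousWithinAt.congr
      · intro p hp
        have hmem := b2_arg_mem hp
        have hmem' : 1 - (1 - tb p.2.1) * ((p.2.2 - d1 e p.1 p.2.1) / wd e p.1 p.2.1) ∈
            Set.Icc (0:ℝ) 1 := ⟨le_trans (tb_mem p.2.1).1 hmem.1, hmem.2⟩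
        rw [PcM_apply, Set.projIcc_of_mem _ hmem']
      · have hmem := b2_arg_mem hp₀
        have hmem' : 1 - (1 - tb p₀.2.1) * ((p₀.2.2 - d1 e p₀.1 p₀.2.1) / wd e p₀.1 p₀.2.1) ∈
            Set.Icc (0:ℝ) 1 := ⟨le_trans (tb_mem p₀.2.1).1 hmem.1, hmem.2⟩
        rw [PcM_apply, Set.projIcc_of_mem _ hmem']
  · have harg : ContinuousAt (fun p : X2space f F E νe × ℝ × ℝ =>
        1 - (1 - tb p.2.1) * ((p.2.2 - d1 e p.1 p.2.1) / wd e p.1 p.2.1)) p₀ := by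
      apply ContinuousAt.sub continuousAt_const
      apply ContinuousAt.mul (continuous_const.sub contP_tb).continuousAt
      exact ContinuousAt.div ((contP_u.sub (contP_d1 e)).continuousAt)
        ((contP_wd e).continuousAt) hw
    exact ((continuous_P hνe).continuousAt.comp
      (continuousAt_fst.prodMk harg)).continuousWithinAt

include hzero in
lemma contOn_b3 (hε : 0 < ε) : ContinuousOn
    (fun p : X2space f F E νe × ℝ × ℝ =>
      P hνe p.1 (tb p.2.1 + (1 - tb p.2.1) * ((p.2.2 - sigt e p.1 p.2.1) / wd e p.1 p.2.1)))
    (Rg3 (f := f) (νe := νe) e) := by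
  intro p₀ hp₀
  by_cases hw : wd e p₀.1 p₀.2.1 = 0
  · by_cases ht : tb p₀.2.1 = 1
    · exact cwa_comp_squeeze (fun q => P hνe q.1 q.2) (continuous_P hνe) Prod.fst
        continuous_fst _ (fun p => tb p.2.1) (fun _ => 1) contP_tb continuous_const _
        (fun p hp => b3_arg_mem hp) p₀ hp₀ ht
    · have hN : Ndeg hνe p₀.1 := sigt_ndeg hνe hzero hε
        (by rcases wd_eq_zero_cases hw with h | h; exact absurd h ht; exact h) ht
      have hca : ContinuousAt (fun p : X2space f F E νe × ℝ × ℝ =>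
          PcM hνe p.1 (Set.projIcc 0 1 zero_le_one
            (tb p.2.1 + (1 - tb p.2.1) * ((p.2.2 - sigt e p.1 p.2.1) / wd e p.1 p.2.1)))) p₀ :=
        ca_comp_const _ (PcM hνe).continuous _ continuous_fst _ p₀
          (fun v => by rw [PcM_apply, P_of_ndeg hνe hzero hN])
      apply hca.continuousWithinAt.congr
      · intro p hp
        have hmem := b3_arg_mem hp
        have hmem' : tb p.2.1 + (1 - tb p.2.1) *
            ((p.2.2 - sigt e p.1 p.2.1) / wd e p.1 p.2.1) ∈ Set.Icc (0:ℝ) 1 :=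
          ⟨le_trans (tb_mem p.2.1).1 hmem.1, hmem.2⟩
        rw [PcM_apply, Set.projIcc_of_mem _ hmem']
      · have hmem := b3_arg_mem hp₀
        have hmem' : tb p₀.2.1 + (1 - tb p₀.2.1) *
            ((p₀.2.2 - sigt e p₀.1 p₀.2.1) / wd e p₀.1 p₀.2.1) ∈ Set.Icc (0:ℝ) 1 :=
          ⟨le_trans (tb_mem p₀.2.1).1 hmem.1, hmem.2⟩
        rw [PcM_apply, Set.projIcc_of_mem _ hmem']
  · have harg : ContinuousAt (fun p : X2space f F E νe × ℝ × ℝ =>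
        tb p.2.1 + (1 - tb p.2.1) * ((p.2.2 - sigt e p.1 p.2.1) / wd e p.1 p.2.1)) p₀ := by
      apply ContinuousAt.add contP_tb.continuousAt
      apply ContinuousAt.mul (continuous_const.sub contP_tb).continuousAt
      exact ContinuousAt.div ((contP_u.sub (contP_sigt e)).continuousAt)
        ((contP_wd e).continuousAt) hw
    exact ((continuous_P hνe).continuousAt.comp
      (continuousAt_fst.prodMk harg)).continuousWithinAt

include hzero in
theorem contOn_T (hε : 0 < ε) : ContinuousOn
    (fun p : X2space f F E νe × ℝ × ℝ => T e hνe p.1 p.2.1 p.2.2) (RS (f := f) νe) := by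
  have hT1 : ContinuousOn (fun p : X2space f F E νe × ℝ × ℝ => T e hνe p.1 p.2.1 p.2.2)
      (Rg1 (f := f) (νe := νe) e) := by
    apply (contOn_b1 (e := e)).congr
    intro p hp
    show T e hνe p.1 p.2.1 p.2.2 = _
    rw [T, if_pos hp.2]
  have hT2 : ContinuousOn (fun p : X2space f F E νe × ℝ × ℝ => T e hνe p.1 p.2.1 p.2.2)
      (Rg2 (f := f) (νe := νe) e) := by
    apply (contOn_b2 hνe hzero hε).congr
    intro p hp
    exact T_eq_b2 hνe hzero hε hp.1 hp.2
  have hT3 : ContinuousOn (fun p : X2space f F E νe × ℝ × ℝ => T e hνe p.1 p.2.1 p.2.2)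
      (Rg3 (f := f) (νe := νe) e) := by
    apply (contOn_b3 hνe hzero hε).congr
    intro p hp
    exact T_eq_b3 hνe hzero hε hp.1 hp.2
  have hT4 : ContinuousOn (fun p : X2space f F E νe × ℝ × ℝ => T e hνe p.1 p.2.1 p.2.2)
      (Rg4 (f := f) (νe := νe) e) := by
    apply (contOn_b4 (e := e)).congr
    intro p hp
    exact T_eq_b4 hνe hzero hε hp.1
  intro p hp
  have hsub : RS (f := f) νe ⊆ (Rg1 (f := f) (νe := νe) e) ∪ ((Rg2 (f := f) (νe := νe) e) ∪
      ((Rg3 (f := f) (νe := νe) e) ∪ (Rg4 (f := f) (νe := νe) e))) := by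
    intro q hq
    rcases le_total q.2.2 (d1 e q.1 q.2.1) with h | h
    · exact Or.inl ⟨hq.1, h⟩
    · rcases le_total q.2.2 (sigt e q.1 q.2.1) with h' | h'
      · exact Or.inr (Or.inl ⟨h, h'⟩)
      · rcases le_total q.2.2 (sigt e q.1 q.2.1 + wd e q.1 q.2.1) with h'' | h''
        · exact Or.inr (Or.inr (Or.inl ⟨h', h''⟩))
        · exact Or.inr (Or.inr (Or.inr ⟨h'', hq.2⟩))
  have aux : ∀ (R : Set (X2space f F E νe × ℝ × ℝ)), IsClosed R →
      ContinuousOn (fun p : X2space f F E νe × ℝ × ℝ => T e hνe p.1 p.2.1 p.2.2) R →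
      ContinuousWithinAt (fun p : X2space f F E νe × ℝ × ℝ => T e hνe p.1 p.2.1 p.2.2) R p := by
    intro R hRc hRo
    by_cases hpR : p ∈ R
    · exact hRo p hpR
    · exact continuousWithinAt_of_notMem_closure (by rw [hRc.closure_eq]; exact hpR)
  apply ContinuousWithinAt.mono _ hsub
  exact ((aux _ (isClosed_Rg1 (e := e)) hT1).union
    ((aux _ (isClosed_Rg2 (e := e)) hT2).union
      ((aux _ (isClosed_Rg3 (e := e)) hT3).union (aux _ (isClosed_Rg4 (e := e)) hT4))))

/-! ### assembly -/

lemma unit_coe_zero : ((0 : unitInterval) : ℝ) = 0 := rfl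
lemma unit_coe_one : ((1 : unitInterval) : ℝ) = 1 := rfl

lemma sig_of_lam0 {z : X2space f F E νe} (h : lam e z = 0) : sig e z = sr z := by
  rw [sig, h]; ring

lemma sigt_of_lam0 {z : X2space f F E νe} {t : ℝ} (h : lam e z = 0) : sigt e z t = sr z := by
  rw [sigt, sig_of_lam0 h]; ring

lemma hgamma_of_const {z : X2space f F E νe} (h : Xγl z = constLoop (f (Xm z))) :
    ∀ v, Xγ z v = f (Xm z) := fun v => by
  rw [show Xγ z = (Xγl z).1 from rfl, h]; rfl

include hzero in
lemma ndeg_of_bbar {z : X2space f F E νe} (hz : z.1 ∈ Bbar12 f e) : Ndeg hνe z := by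
  apply nmap_zero_of hνe hzero ?_ hz.1
  rcases hz.2 with h | h | h
  · have h' : Xγl z = constLoop (f (Xm z)) := h
    rw [gs, show Xγ z = (Xγl z).1 from rfl, h']; rfl
  · rw [gs, show Xs z = 0 from h, ← X0]
  · rw [gs, show Xs z = 1 from h, ← Xloop, ← X0]

variable (e) in
noncomputable def TT (hzero : ∀ m : M₁, νe (Bundle.TotalSpace.mk m 0) = (f m, e m))
    (hε : 0 < ε) : C((X2space f F E νe × unitInterval) × unitInterval, M₂) where
  toFun q := T e hνe q.1.1 ↑q.1.2 ↑q.2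
  continuous_toFun := by
    have hg : Continuous (fun q : (X2space f F E νe × unitInterval) × unitInterval =>
        (q.1.1, ((q.1.2 : ℝ), (q.2 : ℝ)))) :=
      ((continuous_fst.comp continuous_fst).prodMk
        (((continuous_subtype_val.comp (continuous_snd.comp continuous_fst))).prodMk
          (continuous_subtype_val.comp continuous_snd)))
    exact (contOn_T hνe hzero hε).comp_continuous hg (fun q => ⟨q.2.2.1, q.2.2.2⟩)

variable (e) in
noncomputable def Kcur (hzero : ∀ m : M₁, νe (Bundle.TotalSpace.mk m 0) = (f m, e m))
    (hε : 0 < ε) : C(X2space f F E νe × unitInterval, C(unitInterval, M₂)) :=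
  ContinuousMap.curry (TT (e := e) (hνe := hνe) hzero hε)

lemma Kcur_apply (hzero : ∀ m : M₁, νe (Bundle.TotalSpace.mk m 0) = (f m, e m))
    (hε : 0 < ε) (q : X2space f F E νe × unitInterval) (v : unitInterval) :
    Kcur (e := e) (hνe := hνe) hzero hε q v = T e hνe q.1 ↑q.2 ↑v := rfl

include hzero in
lemma Kcur_loopprop (hε : 0 < ε) (q : X2space f F E νe × unitInterval) :
    Kcur (e := e) (hνe := hνe) hzero hε q 0 = Kcur (e := e) (hνe := hνe) hzero hε q 1 := by
  rw [Kcur_apply, Kcur_apply, unit_coe_zero, unit_coe_one, T_zero, T_one, Xloop]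

variable (e) in
/-- the loop component of the `X`-side homotopy -/
noncomputable def loopK (hzero : ∀ m : M₁, νe (Bundle.TotalSpace.mk m 0) = (f m, e m))
    (hε : 0 < ε) (q : X2space f F E νe × unitInterval) : LoopSp M₂ :=
  ⟨Kcur (e := e) (hνe := hνe) hzero hε q, Kcur_loopprop hνe hzero hε q⟩

variable (e) in
/-- the marked point -/
noncomputable def smark (q : X2space f F E νe × unitInterval) : unitInterval :=
  ⟨sigt e q.1 ↑q.2, sigt_mem q.1 ↑q.2⟩

variable (e) in
/-- the disc component -/
noncomputable def xcomp (q : X2space f F E νe × unitInterval) : Dball k ε :=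
  (scl hνe q.1 (tb ↑q.2)).2

variable (e) in
lemma continuous_smark :
    Continuous fun q : X2space f F E νe × unitInterval => smark e q :=
  Continuous.subtype_mk ((contP_sigt e).comp (continuous_fst.prodMk
    ((continuous_subtype_val.comp continuous_snd).prodMk
      (continuous_const (y := (0:ℝ)))))) _

lemma continuous_xcomp :
    Continuous fun q : X2space f F E νe × unitInterval => xcomp (hνe := hνe) q :=
  continuous_snd.comp ((continuous_scl hνe).comp (continuous_fst.prodMk
    (continuous_tb.comp (continuous_subtype_val.comp continuous_snd))))

variable (e) in
lemma continuous_loopK (hzero : ∀ m : M₁, νe (Bundle.TotalSpace.mk m 0) = (f m, e m))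
    (hε : 0 < ε) :
    Continuous fun q : X2space f F E νe × unitInterval =>
      loopK (e := e) (hνe := hνe) hzero hε q :=
  Continuous.subtype_mk (Kcur (e := e) (hνe := hνe) hzero hε).continuous _

include hzero in
lemma loopK_zero (hε : 0 < ε) (q : X2space f F E νe × unitInterval) :
    f (Xm q.1) = (loopK (e := e) (hνe := hνe) hzero hε q).1 0 := by
  show f (Xm q.1) = Kcur (e := e) (hνe := hνe) hzero hε q 0
  rw [Kcur_apply, unit_coe_zero, T_zero, ← X0]

include hzero in
lemma loopK_mark (hε : 0 < ε) (q : X2space f F E νe × unitInterval) :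
    (loopK (e := e) (hνe := hνe) hzero hε q).1 (smark e q) = P hνe q.1 (tb ↑q.2) := by
  show Kcur (e := e) (hνe := hνe) hzero hε q ⟨sigt e q.1 ↑q.2, _⟩ = _
  rw [Kcur_apply]
  exact T_mark hνe hzero hε q.1 ↑q.2

include hzero in
lemma Kmem (hε : 0 < ε) (q : X2space f F E νe × unitInterval) :
    ((loopK (e := e) (hνe := hνe) hzero hε q).1 (smark e q), xcomp (hνe := hνe) q) ∈ Set.range νe := by
  rw [loopK_mark hνe hzero hε]
  exact ⟨_, rfl⟩

variable (e) in
/-- the `X`-side homotopy -/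
noncomputable def KH (hzero : ∀ m : M₁, νe (Bundle.TotalSpace.mk m 0) = (f m, e m))
    (hε : 0 < ε) : C(X2space f F E νe × unitInterval, X2space f F E νe) where
  toFun q := ⟨(⟨(Xm q.1, loopK (e := e) (hνe := hνe) hzero hε q), loopK_zero hνe hzero hε q⟩,
    smark e q, xcomp (hνe := hνe) q), Kmem hνe hzero hε q⟩
  continuous_toFun := by
    apply Continuous.subtype_mk
    apply Continuous.prodMk
    · apply Continuous.subtype_mk
      exact (continuous_Xm.comp continuous_fst).prodMk
        (Continuous.subtype_mk (Kcur (e := e) (hνe := hνe) hzero hε).continuous _)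
    · exact (continuous_smark e).prodMk (continuous_xcomp hνe)

variable (e) in
/-- the homotopy inverse -/
noncomputable def rmap (hzero : ∀ m : M₁, νe (Bundle.TotalSpace.mk m 0) = (f m, e m))
    (hε : 0 < ε) : C(X2space f F E νe, W112 f) where
  toFun z := ⟨(Xm z, (nmap hνe z).proj, loopK (e := e) (hνe := hνe) hzero hε (z, 0), smark e (z, 0)),
    loopK_zero hνe hzero hε (z, 0), by
      show f _ = (loopK (e := e) (hνe := hνe) hzero hε (z, 0)).1 (smark e (z, 0))
      rw [loopK_mark hνe hzero hε (z, 0)]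
      have h0 : tb ((0 : unitInterval) : ℝ) = 0 := by rw [unit_coe_zero, tb_zero]
      rw [h0, P, scl_zero hνe hzero]⟩
  continuous_toFun := by
    have hg : Continuous fun z : X2space f F E νe => (z, (0 : unitInterval)) :=
      continuous_id.prodMk continuous_const
    have h1 : Continuous fun z : X2space f F E νe =>
        loopK (e := e) (hνe := hνe) hzero hε (z, (0 : unitInterval)) :=
      (continuous_loopK (e := e) (hνe := hνe) hzero hε).comp hg
    have h2 : Continuous fun z : X2space f F E νe => smark e (z, (0 : unitInterval)) :=
      (continuous_smark e).comp hg
    apply Continuous.subtype_mk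
    exact continuous_Xm.prodMk (Continuous.prodMk
      ((FiberBundle.continuous_proj F E).comp (continuous_nmap hνe))
      (Continuous.prodMk h1 h2))

variable (e) in
/-- the forward map -/
noncomputable def Phi (hzero : ∀ m : M₁, νe (Bundle.TotalSpace.mk m 0) = (f m, e m)) :
    C(W112 f, X2space f F E νe) where
  toFun q := ⟨(⟨(q.1.1, q.1.2.2.1), q.2.1⟩, q.1.2.2.2, e q.1.2.1),
    ⟨Bundle.TotalSpace.mk q.1.2.1 0, by
      show νe (Bundle.TotalSpace.mk q.1.2.1 0) = (q.1.2.2.1.1 q.1.2.2.2, e q.1.2.1)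
      rw [hzero, q.2.2]⟩⟩
  continuous_toFun := by
    apply Continuous.subtype_mk
    refine Continuous.prodMk (Continuous.subtype_mk ?_ _) (Continuous.prodMk ?_ ?_)
    · exact (continuous_fst.comp continuous_subtype_val).prodMk
        ((continuous_fst.comp (continuous_snd.comp
          (continuous_snd.comp continuous_subtype_val))))
    · exact continuous_snd.comp (continuous_snd.comp
        (continuous_snd.comp continuous_subtype_val))
    · exact e.continuous.comp (continuous_fst.comp (continuous_snd.comp
        continuous_subtype_val))

include hzero in
lemma nmap_phi (q : W112 f) :
    nmap hνe ((Phi (e := e) hzero) q) = Bundle.TotalSpace.mk q.1.2.1 0 := by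
  apply hνe.injective
  show νe _ = νe _
  rw [nmap_spec, hzero]
  show (gs ((Phi (e := e) hzero) q), Xx ((Phi (e := e) hzero) q)) = _
  rw [show gs ((Phi (e := e) hzero) q) = q.1.2.2.1.1 q.1.2.2.2 from rfl,
    show Xx ((Phi (e := e) hzero) q) = e q.1.2.1 from rfl, q.2.2]

variable (e) in
/-- the `W`-side homotopy -/
noncomputable def LH (hzero : ∀ m : M₁, νe (Bundle.TotalSpace.mk m 0) = (f m, e m))
    (hε : 0 < ε) : C(W112 f × unitInterval, W112 f) where
  toFun q := ⟨(q.1.1.1, q.1.1.2.1, loopK (e := e) (hνe := hνe) hzero hε ((Phi (e := e) hzero) q.1, q.2),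
      smark e ((Phi (e := e) hzero) q.1, q.2)), by
    constructor
    · show f (Xm ((Phi (e := e) hzero) q.1)) =
        (loopK (e := e) (hνe := hνe) hzero hε ((Phi (e := e) hzero) q.1, q.2)).1 0
      exact loopK_zero hνe hzero hε ((Phi (e := e) hzero) q.1, q.2)
    · show f q.1.1.2.1 =
        (loopK (e := e) (hνe := hνe) hzero hε ((Phi (e := e) hzero) q.1, q.2)).1
          (smark e ((Phi (e := e) hzero) q.1, q.2))
      rw [loopK_mark hνe hzero hε ((Phi (e := e) hzero) q.1, q.2), P,
        scl_ndeg hνe hzero q.1.1.2.1 (nmap_phi hνe hzero q.1) _]⟩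
  continuous_toFun := by
    apply Continuous.subtype_mk
    have hphi : Continuous fun q : W112 f × unitInterval =>
        ((Phi (e := e) hzero) q.1, q.2) :=
      ((Phi (e := e) hzero).continuous.comp continuous_fst).prodMk continuous_snd
    refine Continuous.prodMk ?_ (Continuous.prodMk ?_ (Continuous.prodMk ?_ ?_))
    · exact continuous_fst.comp (continuous_subtype_val.comp continuous_fst)
    · exact continuous_fst.comp (continuous_snd.comp
        (continuous_subtype_val.comp continuous_fst))
    · exact (continuous_loopK (e := e) (hνe := hνe) hzero hε).comp hphi
    · exact (continuous_smark e).comp hphi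

/-! ### endpoints and preservation -/

include hzero in
lemma KH_one (hε : 0 < ε) (z : X2space f F E νe) :
    (KH (e := e) (hνe := hνe) hzero hε) (z, 1) = z := by
  apply Subtype.ext
  have hl : loopK (e := e) (hνe := hνe) hzero hε (z, 1) = Xγl z := by
    apply Subtype.ext; apply ContinuousMap.ext; intro v
    show T e hνe z ((1 : unitInterval) : ℝ) ↑v = (Xγl z).1 v
    rw [T_id hνe (by norm_num [tb])]
    rfl
  have hs : smark e (z, (1 : unitInterval)) = Xs z := by
    apply Subtype.ext
    show sigt e z ((1 : unitInterval) : ℝ) = ↑(Xs z)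
    rw [unit_coe_one, sigt_at_one]
    rfl
  have hx : xcomp (hνe := hνe) (z, (1 : unitInterval)) = Xx z := by
    show (scl hνe z (tb ((1 : unitInterval) : ℝ))).2 = Xx z
    rw [unit_coe_one, tb_one, scl_one]
  exact Prod.ext (Subtype.ext (Prod.ext rfl hl)) (Prod.ext hs hx)

include hzero in
lemma KH_zero (hε : 0 < ε) (z : X2space f F E νe) :
    (KH (e := e) (hνe := hνe) hzero hε) (z, 0) =
      (Phi (e := e) hzero) ((rmap (e := e) (hνe := hνe) hzero hε) z) := by
  apply Subtype.ext
  have hx : xcomp (hνe := hνe) (z, (0 : unitInterval)) = e ((nmap hνe z).proj) := by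
    show (scl hνe z (tb ((0 : unitInterval) : ℝ))).2 = _
    rw [unit_coe_zero, tb_zero, scl_zero hνe hzero]
  exact Prod.ext (Subtype.ext rfl) (Prod.ext rfl hx)

include hzero in
lemma LH_one (hε : 0 < ε) (q : W112 f) :
    (LH (e := e) (hνe := hνe) hzero hε) (q, 1) = q := by
  apply Subtype.ext
  have hl : loopK (e := e) (hνe := hνe) hzero hε ((Phi (e := e) hzero) q, 1) = q.1.2.2.1 := by
    apply Subtype.ext; apply ContinuousMap.ext; intro v
    show T e hνe ((Phi (e := e) hzero) q) ((1 : unitInterval) : ℝ) ↑v = _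
    rw [T_id hνe (by norm_num [tb])]
    rfl
  have hs : smark e ((Phi (e := e) hzero) q, (1 : unitInterval)) = q.1.2.2.2 := by
    apply Subtype.ext
    show sigt e ((Phi (e := e) hzero) q) ((1 : unitInterval) : ℝ) = _
    rw [unit_coe_one, sigt_at_one]
    rfl
  exact Prod.ext rfl (Prod.ext rfl (Prod.ext hl hs))

include hzero in
lemma LH_zero (hε : 0 < ε) (q : W112 f) :
    (LH (e := e) (hνe := hνe) hzero hε) (q, 0) =
      (rmap (e := e) (hνe := hνe) hzero hε) ((Phi (e := e) hzero) q) := by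
  apply Subtype.ext
  have hm' : (nmap hνe ((Phi (e := e) hzero) q)).proj = q.1.2.1 := by
    rw [nmap_phi hνe hzero]
  exact Prod.ext rfl (Prod.ext hm'.symm (Prod.ext rfl rfl))

include hzero in
lemma mapsTo_Phi :
    Set.MapsTo (Phi (e := e) (νe := νe) hzero) (B112 f)
      {x : X2space f F E νe | (x : Lam12 f × unitInterval × Dball k ε) ∈ Bbar12 f e} := by
  rintro q ⟨hm, hd⟩
  constructor
  · show e q.1.2.1 = e q.1.1
    rw [hm]
  · exact hd

include hzero in
lemma mapsTo_rmap (hε : 0 < ε) :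
    Set.MapsTo (rmap (e := e) (hνe := hνe) hzero hε)
      {x : X2space f F E νe | (x : Lam12 f × unitInterval × Dball k ε) ∈ Bbar12 f e}
      (B112 f) := by
  intro z hz
  have hN : Ndeg hνe z := ndeg_of_bbar hνe hzero hz
  constructor
  · show Xm z = (nmap hνe z).proj
    rw [hN]
  · rcases hz.2 with h | h | h
    · left
      have h' : Xγl z = constLoop (f (Xm z)) := h
      show loopK (e := e) (hνe := hνe) hzero hε (z, 0) = constLoop (f (Xm z))
      apply Subtype.ext; apply ContinuousMap.ext; intro v
      show T e hνe z ((0 : unitInterval) : ℝ) ↑v = _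
      rw [T_const hνe hzero (hgamma_of_const h') hN]
      rfl
    · right; left
      apply Subtype.ext
      show sigt e z ((0 : unitInterval) : ℝ) = 0
      rw [sigt_of_lam0 (lam_of_Xx hz.1), sr, show Xs z = 0 from h]
      rfl
    · right; right
      apply Subtype.ext
      show sigt e z ((0 : unitInterval) : ℝ) = 1
      rw [sigt_of_lam0 (lam_of_Xx hz.1), sr, show Xs z = 1 from h]
      rfl

include hzero in
lemma pres_KH (hε : 0 < ε) {z : X2space f F E νe}
    (hz : (z : Lam12 f × unitInterval × Dball k ε) ∈ Bbar12 f e) (t : unitInterval) :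
    (((KH (e := e) (hνe := hνe) hzero hε) (z, t) : X2space f F E νe) :
      Lam12 f × unitInterval × Dball k ε) ∈ Bbar12 f e := by
  have hN : Ndeg hνe z := ndeg_of_bbar hνe hzero hz
  constructor
  · show (scl hνe z (tb ↑t)).2 = e (Xm z)
    rw [scl_ndeg hνe hzero (Xm z) hN]
  · rcases hz.2 with h | h | h
    · left
      have h' : Xγl z = constLoop (f (Xm z)) := h
      show loopK (e := e) (hνe := hνe) hzero hε (z, t) = constLoop (f (Xm z))
      apply Subtype.ext; apply ContinuousMap.ext; intro v
      show T e hνe z (t : ℝ) ↑v = _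
      rw [T_const hνe hzero (hgamma_of_const h') hN]
      rfl
    · right; left
      apply Subtype.ext
      show sigt e z (t : ℝ) = 0
      rw [sigt_of_lam0 (lam_of_Xx hz.1), sr, show Xs z = 0 from h]
      rfl
    · right; right
      apply Subtype.ext
      show sigt e z (t : ℝ) = 1
      rw [sigt_of_lam0 (lam_of_Xx hz.1), sr, show Xs z = 1 from h]
      rfl

include hzero in
lemma pres_LH (hε : 0 < ε) {q : W112 f} (hq : q ∈ B112 f) (τ : unitInterval) :
    (LH (e := e) (hνe := hνe) hzero hε) (q, τ) ∈ B112 f := by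
  obtain ⟨hm, hd⟩ := hq
  have hxx : Xx ((Phi (e := e) hzero) q) = e (Xm ((Phi (e := e) hzero) q)) := by
    show e q.1.2.1 = e q.1.1
    rw [hm]
  constructor
  · exact hm
  · rcases hd with h | h | h
    · left
      have hN : Ndeg hνe ((Phi (e := e) hzero) q) := by
        show nmap hνe ((Phi (e := e) hzero) q) = Bundle.TotalSpace.mk q.1.1 0
        rw [nmap_phi hνe hzero, hm]
      show loopK (e := e) (hνe := hνe) hzero hε ((Phi (e := e) hzero) q, τ) =
        constLoop (f q.1.1)
      apply Subtype.ext; apply ContinuousMap.ext; intro v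
      have h' : Xγl ((Phi (e := e) hzero) q) =
          constLoop (f (Xm ((Phi (e := e) hzero) q))) := h
      show T e hνe ((Phi (e := e) hzero) q) (τ : ℝ) ↑v = _
      rw [T_const hνe hzero (hgamma_of_const h') hN]
      rfl
    · right; left
      apply Subtype.ext
      show sigt e ((Phi (e := e) hzero) q) (τ : ℝ) = 0
      rw [sigt_of_lam0 (lam_of_Xx hxx)]
      exact congrArg Subtype.val h
    · right; right
      apply Subtype.ext
      show sigt e ((Phi (e := e) hzero) q) (τ : ℝ) = 1
      rw [sigt_of_lam0 (lam_of_Xx hxx)]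
      exact congrArg Subtype.val h

end HEaux

theorem f2e_pair_homotopy_equivalence
    (f : C(M₁, M₂)) {k : ℕ} {ε : ℝ} (hε : 0 < ε) (hε' : ε < 1 / 4)
    (e : C(M₁, Dball k ε))
    (F : Type) [NormedAddCommGroup F] [NormedSpace ℝ F]
    (E : M₁ → Type) [∀ m, TopologicalSpace (E m)]
    [∀ m, AddCommGroup (E m)] [∀ m, Module ℝ (E m)]
    [TopologicalSpace (Bundle.TotalSpace F E)]
    [FiberBundle F E] [VectorBundle ℝ F E]
    (νe : C(Bundle.TotalSpace F E, M₂ × Dball k ε))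
    (hνe : Topology.IsEmbedding νe)
    (hzero : ∀ m : M₁, νe (Bundle.TotalSpace.mk m 0) = (f m, e m)) :
    ∃ Φ : C(W112 f, X2space f F E νe),
      (∀ q : W112 f,
        ((Φ q : X2space f F E νe) : Lam12 f × unitInterval × Dball k ε) =
          (⟨(q.1.1, q.1.2.2.1), q.2.1⟩, q.1.2.2.2, e q.1.2.1)) ∧
      ∃ r : C(X2space f F E νe, W112 f),
        IsPairHomotopyInverse (B112 f)
          {x : X2space f F E νe | (x : Lam12 f × unitInterval × Dball k ε) ∈ Bbar12 f e}
          Φ r := by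
  refine ⟨Phi (e := e) hzero, fun q => rfl, rmap (e := e) (hνe := hνe) hzero hε,
    mapsTo_Phi hzero, mapsTo_rmap hνe hzero hε,
    ⟨LH (e := e) (hνe := hνe) hzero hε, fun q => LH_zero hνe hzero hε q,
      fun q => LH_one hνe hzero hε q, fun q hq t => pres_LH hνe hzero hε hq t⟩,
    ⟨KH (e := e) (hνe := hνe) hzero hε, fun z => KH_zero hνe hzero hε z,
      fun z => KH_one hνe hzero hε z, fun z hz t => pres_KH hνe hzero hε hz t⟩⟩
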